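/- Let Z_w(t) and Z_diff(t) be the standardized versions of R_w(t) and R_diff(t) = R₁(t) − R₂(t), i.e., Z(t) = (R(t) − E[R(t)])/√Var(R(t)). Then the generalized edge-count statistic S(t), defined as the quadratic form (R₁(t)−E R₁(t), R₂(t)−E R₂(t)) Σ(t)⁻¹ (R₁(t)−E R₁(t), R₂(t)−E R₂(t))ᵀ where Σ(t) is the covariance matrix of (R₁(t), R₂(t)), satisfies S(t) = Z_w(t)² + Z_diff(t)². -/

import Mathlib

open Finset
open scoped Classical

noncomputable section

/-- Label of vertex `v` under permutation `π`: a value in `{1,...,n}`. -/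
def lab {n : ℕ} (π : Equiv.Perm (Fin n)) (v : Fin n) : ℕ := (π v).val + 1

/-- Number of edges of `G` with both endpoint labels `≤ t`. -/
def R1 {n : ℕ} (G : SimpleGraph (Fin n)) (t : ℕ) (π : Equiv.Perm (Fin n)) : ℕ :=
  (G.edgeFinset.filter (fun e => ∀ v ∈ e, lab π v ≤ t)).card

/-- Number of edges of `G` with both endpoint labels `> t`. -/
def R2 {n : ℕ} (G : SimpleGraph (Fin n)) (t : ℕ) (π : Equiv.Perm (Fin n)) : ℕ :=
  (G.edgeFinset.filter (fun e => ∀ v ∈ e, t < lab π v)).card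

/-- Number of edges of `G` with one endpoint label `≤ t` and the other `> t`. -/
def R0 {n : ℕ} (G : SimpleGraph (Fin n)) (t : ℕ) (π : Equiv.Perm (Fin n)) : ℕ :=
  (G.edgeFinset.filter (fun e => (∃ v ∈ e, lab π v ≤ t) ∧ (∃ v ∈ e, t < lab π v))).card

/-- Expectation under the permutation null distribution (uniform over all `n!` permutations). -/
def Ex {n : ℕ} (f : Equiv.Perm (Fin n) → ℝ) : ℝ :=
  (∑ π : Equiv.Perm (Fin n), f π) / (Nat.factorial n)

/-- Variance under the permutation null distribution. -/
def Var {n : ℕ} (f : Equiv.Perm (Fin n) → ℝ) : ℝ := Ex (fun π => (f π - Ex f) ^ 2)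

/-- Covariance under the permutation null distribution. -/
def Cov {n : ℕ} (f g : Equiv.Perm (Fin n) → ℝ) : ℝ :=
  Ex (fun π => (f π - Ex f) * (g π - Ex g))

/-- Weighted edge count `R_w(t) = q(t) R₁(t) + p(t) R₂(t)` with `p(t) = (t-1)/(n-2)`. -/
def Rw {n : ℕ} (G : SimpleGraph (Fin n)) (t : ℕ) (π : Equiv.Perm (Fin n)) : ℝ :=
  (1 - ((t : ℝ) - 1) / ((n : ℝ) - 2)) * (R1 G t π : ℝ)
    + (((t : ℝ) - 1) / ((n : ℝ) - 2)) * (R2 G t π : ℝ)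


/-- Difference of within-group edge counts `R_diff(t) = R₁(t) - R₂(t)`. -/
def Rdiff {n : ℕ} (G : SimpleGraph (Fin n)) (t : ℕ) (π : Equiv.Perm (Fin n)) : ℝ :=
  (R1 G t π : ℝ) - (R2 G t π : ℝ)


/-- Standardized weighted edge-count statistic. -/
def Zw {n : ℕ} (G : SimpleGraph (Fin n)) (t : ℕ) (π : Equiv.Perm (Fin n)) : ℝ :=
  (Rw G t π - Ex (fun σ => Rw G t σ)) / Real.sqrt (Var (fun σ => Rw G t σ))

/-- Standardized difference-of-within-edge-counts statistic. -/
def Zdiff {n : ℕ} (G : SimpleGraph (Fin n)) (t : ℕ) (π : Equiv.Perm (Fin n)) : ℝ :=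
  (Rdiff G t π - Ex (fun σ => Rdiff G t σ)) / Real.sqrt (Var (fun σ => Rdiff G t σ))

/-- Covariance matrix `Σ(t)` of `(R₁(t), R₂(t))`. -/
def SigmaMat {n : ℕ} (G : SimpleGraph (Fin n)) (t : ℕ) : Matrix (Fin 2) (Fin 2) ℝ :=
  !![Var (fun π => (R1 G t π : ℝ)), Cov (fun π => (R1 G t π : ℝ)) (fun π => (R2 G t π : ℝ));
     Cov (fun π => (R1 G t π : ℝ)) (fun π => (R2 G t π : ℝ)), Var (fun π => (R2 G t π : ℝ))]

/-- Generalized edge-count statistic `S(t)`, a quadratic form in the centered counts. -/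
def S {n : ℕ} (G : SimpleGraph (Fin n)) (t : ℕ) (π : Equiv.Perm (Fin n)) : ℝ :=
  dotProduct
    ![(R1 G t π : ℝ) - Ex (fun σ => (R1 G t σ : ℝ)),
      (R2 G t π : ℝ) - Ex (fun σ => (R2 G t σ : ℝ))]
    ((SigmaMat G t)⁻¹.mulVec
      ![(R1 G t π : ℝ) - Ex (fun σ => (R1 G t σ : ℝ)),
        (R2 G t π : ℝ) - Ex (fun σ => (R2 G t σ : ℝ))])

namespace EA
variable {n : ℕ}

lemma fac_ne : ((Nat.factorial n : ℕ) : ℝ) ≠ 0 :=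
  Nat.cast_ne_zero.mpr (Nat.factorial_ne_zero n)

lemma Ex_const (c : ℝ) : Ex (fun _ : Equiv.Perm (Fin n) => c) = c := by
  unfold Ex
  rw [Finset.sum_const, Finset.card_univ, Fintype.card_perm, Fintype.card_fin, nsmul_eq_mul]
  field_simp

lemma Ex_cmul (c : ℝ) (f : Equiv.Perm (Fin n) → ℝ) :
    Ex (fun π => c * f π) = c * Ex f := by
  unfold Ex; rw [← Finset.mul_sum]; ring

lemma Ex_add (f g : Equiv.Perm (Fin n) → ℝ) :
    Ex (fun π => f π + g π) = Ex f + Ex g := by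
  unfold Ex; rw [Finset.sum_add_distrib]; ring

lemma Ex_comb4 (f g h k : Equiv.Perm (Fin n) → ℝ) :
    Ex (fun π => f π - g π - h π + k π) = Ex f - Ex g - Ex h + Ex k := by
  unfold Ex
  rw [Finset.sum_add_distrib, Finset.sum_sub_distrib, Finset.sum_sub_distrib]
  ring

lemma Ex_lin (x y : ℝ) (f g : Equiv.Perm (Fin n) → ℝ) :
    Ex (fun π => x * f π + y * g π) = x * Ex f + y * Ex g := by
  unfold Ex
  rw [Finset.sum_add_distrib, ← Finset.mul_sum, ← Finset.mul_sum]; ring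

lemma Ex_sum {ι : Type*} (s : Finset ι) (F : ι → Equiv.Perm (Fin n) → ℝ) :
    Ex (fun π => ∑ e ∈ s, F e π) = ∑ e ∈ s, Ex (F e) := by
  unfold Ex
  rw [Finset.sum_comm, Finset.sum_div]

lemma Cov_eq (f g : Equiv.Perm (Fin n) → ℝ) :
    Cov f g = Ex (fun π => f π * g π) - Ex f * Ex g := by
  unfold Cov
  have h : (fun π => (f π - Ex f) * (g π - Ex g))
      = fun π => (fun π => f π * g π) π - (fun π => Ex f * g π) π
          - (fun π => Ex g * f π) π + (fun π => Ex f * Ex g) π := by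
    funext π; simp only []; ring
  rw [h, Ex_comb4, Ex_cmul, Ex_cmul, Ex_const]; ring

lemma Cov_comm (f g : Equiv.Perm (Fin n) → ℝ) : Cov f g = Cov g f := by
  unfold Cov; congr 1; funext π; ring

lemma Var_eq_Cov (f : Equiv.Perm (Fin n) → ℝ) : Var f = Cov f f := by
  unfold Var Cov; congr 1; funext π; ring

lemma Cov_comb (x y z w : ℝ) (f g : Equiv.Perm (Fin n) → ℝ) :
    Cov (fun π => x * f π + y * g π) (fun π => z * f π + w * g π)
      = x*z * Cov f f + (x*w + y*z) * Cov f g + y*w * Cov g g := by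
  rw [Cov_eq, Cov_eq, Cov_eq, Cov_eq, Ex_lin, Ex_lin]
  have h : (fun π => (x * f π + y * g π) * (z * f π + w * g π))
      = fun π => (x*z) * ((fun π => f π * f π) π) + ((fun π => (x*w+y*z) * (f π * g π) + (y*w) * (g π * g π)) π) := by
    funext π; ring
  rw [h, Ex_add]
  rw [Ex_cmul]
  have h2 : (fun π => (x*w+y*z) * (f π * g π) + (y*w) * (g π * g π))
      = fun π => (x*w+y*z) * ((fun π => f π * g π) π) + (y*w) * ((fun π => g π * g π) π) := rfl
  rw [h2, Ex_add, Ex_cmul, Ex_cmul]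
  ring

lemma Cov_sum_left {ι : Type*} (s : Finset ι) (F : ι → Equiv.Perm (Fin n) → ℝ)
    (g : Equiv.Perm (Fin n) → ℝ) :
    Cov (fun π => ∑ e ∈ s, F e π) g = ∑ e ∈ s, Cov (F e) g := by
  rw [Cov_eq]
  have h : (fun π => (∑ e ∈ s, F e π) * g π) = fun π => ∑ e ∈ s, F e π * g π := by
    funext π; rw [Finset.sum_mul]
  rw [h, Ex_sum, Ex_sum, Finset.sum_mul, ← Finset.sum_sub_distrib]
  exact Finset.sum_congr rfl fun e _ => (Cov_eq (F e) g).symm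

lemma Cov_sum_right {ι : Type*} (s : Finset ι) (f : Equiv.Perm (Fin n) → ℝ)
    (F : ι → Equiv.Perm (Fin n) → ℝ) :
    Cov f (fun π => ∑ e ∈ s, F e π) = ∑ e ∈ s, Cov f (F e) := by
  rw [Cov_comm, Cov_sum_left]
  exact Finset.sum_congr rfl fun e _ => Cov_comm _ _

lemma Cov_add_right (f g h : Equiv.Perm (Fin n) → ℝ) :
    Cov f (fun π => g π + h π) = Cov f g + Cov f h := by
  rw [Cov_eq, Cov_eq, Cov_eq, Ex_add]
  have h1 : (fun π => f π * (g π + h π))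
      = fun π => (fun π => f π * g π) π + (fun π => f π * h π) π := by funext π; ring
  rw [h1, Ex_add]; ring

lemma Cov_const_right (f : Equiv.Perm (Fin n) → ℝ) (c : ℝ) :
    Cov f (fun _ => c) = 0 := by
  rw [Cov_eq, Ex_const]
  have h1 : (fun π => f π * c) = fun π => c * f π := by funext π; ring
  rw [h1, Ex_cmul]; ring

end EA

namespace EA
variable {n : ℕ}

lemma sum_comp_mul_right (ρ : Equiv.Perm (Fin n)) (F : Equiv.Perm (Fin n) → ℝ) :
    ∑ π : Equiv.Perm (Fin n), F (π * ρ) = ∑ π : Equiv.Perm (Fin n), F π :=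
  Fintype.sum_equiv (Equiv.mulRight ρ) _ _ (fun _ => rfl)

lemma exists_perm_pair {a b c d : Fin n} (hab : a ≠ b) (hcd : c ≠ d) :
    ∃ ρ : Equiv.Perm (Fin n), ρ a = c ∧ ρ b = d := by
  set σ := Equiv.swap a c with hσ
  have hσa : σ a = c := Equiv.swap_apply_left a c
  have hne : σ b ≠ c := by
    intro h
    have h2 := congrArg σ h
    rw [hσ, Equiv.swap_apply_self, Equiv.swap_apply_right] at h2
    exact hab h2.symm
  refine ⟨σ.trans (Equiv.swap (σ b) d), ?_, ?_⟩
  · simp only [Equiv.trans_apply, hσa]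
    exact Equiv.swap_apply_of_ne_of_ne (Ne.symm hne) hcd
  · simp only [Equiv.trans_apply]
    exact Equiv.swap_apply_left _ _

lemma exists_perm_triple {a b c x y z : Fin n} (hab : a ≠ b) (hac : a ≠ c) (hbc : b ≠ c)
    (hxy : x ≠ y) (hxz : x ≠ z) (hyz : y ≠ z) :
    ∃ ρ : Equiv.Perm (Fin n), ρ a = x ∧ ρ b = y ∧ ρ c = z := by
  obtain ⟨ρ₀, h1, h2⟩ := exists_perm_pair hab hxy
  have hcx' : ρ₀ c ≠ x := by rw [← h1]; intro h; exact hac (ρ₀.injective h).symm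
  have hcy : ρ₀ c ≠ y := by rw [← h2]; intro h; exact hbc (ρ₀.injective h).symm
  refine ⟨ρ₀.trans (Equiv.swap (ρ₀ c) z), ?_, ?_, ?_⟩
  · simp only [Equiv.trans_apply, h1]
    exact Equiv.swap_apply_of_ne_of_ne (Ne.symm hcx') hxz
  · simp only [Equiv.trans_apply, h2]
    exact Equiv.swap_apply_of_ne_of_ne (Ne.symm hcy) hyz
  · simp only [Equiv.trans_apply]
    exact Equiv.swap_apply_left _ _

lemma P3 (hn : 3 ≤ n) {a b c : Fin n} (hab : a ≠ b) (hac : a ≠ c) (hbc : b ≠ c)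
    (g1 g2 g3 : Fin n → ℝ) :
    ∑ π : Equiv.Perm (Fin n), g1 (π a) * g2 (π b) * g3 (π c)
      = ((n - 3).factorial : ℝ) *
        ∑ x : Fin n, ∑ y ∈ Finset.univ.erase x, ∑ z ∈ (Finset.univ.erase x).erase y,
          g1 x * g2 y * g3 z := by
  set B : ℝ := ∑ π : Equiv.Perm (Fin n), g1 (π a) * g2 (π b) * g3 (π c) with hB
  have key : ∀ x y z : Fin n, x ≠ y → x ≠ z → y ≠ z →
      (∑ π : Equiv.Perm (Fin n), g1 (π x) * g2 (π y) * g3 (π z)) = B := by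
    intro x y z hxy hxz hyz
    obtain ⟨ρ, hx, hy, hz⟩ := exists_perm_triple hab hac hbc hxy hxz hyz
    rw [hB]
    calc ∑ π : Equiv.Perm (Fin n), g1 (π x) * g2 (π y) * g3 (π z)
        = ∑ π : Equiv.Perm (Fin n), g1 ((π * ρ) a) * g2 ((π * ρ) b) * g3 ((π * ρ) c) := by
          simp only [Equiv.Perm.mul_apply, hx, hy, hz]
      _ = ∑ π : Equiv.Perm (Fin n), g1 (π a) * g2 (π b) * g3 (π c) :=
          sum_comp_mul_right ρ (fun π => g1 (π a) * g2 (π b) * g3 (π c))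
  -- nested sum of the constant B
  have hT : (∑ x : Fin n, ∑ y ∈ Finset.univ.erase x, ∑ z ∈ (Finset.univ.erase x).erase y,
        (∑ π : Equiv.Perm (Fin n), g1 (π x) * g2 (π y) * g3 (π z)))
      = ((n * ((n-1) * (n-2)) : ℕ) : ℝ) * B := by
    have h1 : ∀ x : Fin n, ∀ y ∈ Finset.univ.erase x,
        (∑ z ∈ (Finset.univ.erase x).erase y,
          (∑ π : Equiv.Perm (Fin n), g1 (π x) * g2 (π y) * g3 (π z)))
        = ((n - 2 : ℕ) : ℝ) * B := by
      intro x y hy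
      have hyx : y ≠ x := (Finset.mem_erase.1 hy).1
      rw [Finset.sum_congr rfl (fun z hz => by
        have hz1 : z ≠ y := (Finset.mem_erase.1 hz).1
        have hz2 : z ≠ x := (Finset.mem_erase.1 (Finset.mem_erase.1 hz).2).1
        exact key x y z (Ne.symm hyx) (Ne.symm hz2) (Ne.symm hz1))]
      rw [Finset.sum_const, Finset.card_erase_of_mem hy, Finset.card_erase_of_mem (Finset.mem_univ x),
        Finset.card_univ, Fintype.card_fin, nsmul_eq_mul]
      norm_num [Nat.sub_sub]
    rw [Finset.sum_congr rfl (fun x _ => Finset.sum_congr rfl (fun y hy => h1 x y hy))]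
    rw [Finset.sum_congr rfl (fun x _ => by
      rw [Finset.sum_const, Finset.card_erase_of_mem (Finset.mem_univ x), Finset.card_univ,
        Fintype.card_fin, nsmul_eq_mul])]
    rw [Finset.sum_const, Finset.card_univ, Fintype.card_fin, nsmul_eq_mul]
    push_cast
    ring
  -- swap order and reindex
  have hswap : (∑ x : Fin n, ∑ y ∈ Finset.univ.erase x, ∑ z ∈ (Finset.univ.erase x).erase y,
        (∑ π : Equiv.Perm (Fin n), g1 (π x) * g2 (π y) * g3 (π z)))
      = ((n.factorial : ℕ) : ℝ) *
        ∑ x : Fin n, ∑ y ∈ Finset.univ.erase x, ∑ z ∈ (Finset.univ.erase x).erase y,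
          g1 x * g2 y * g3 z := by
    have step1 : (∑ x : Fin n, ∑ y ∈ Finset.univ.erase x, ∑ z ∈ (Finset.univ.erase x).erase y,
          (∑ π : Equiv.Perm (Fin n), g1 (π x) * g2 (π y) * g3 (π z)))
        = ∑ π : Equiv.Perm (Fin n), ∑ x : Fin n, ∑ y ∈ Finset.univ.erase x,
            ∑ z ∈ (Finset.univ.erase x).erase y, g1 (π x) * g2 (π y) * g3 (π z) := by
      rw [Finset.sum_congr rfl (fun x _ => Finset.sum_congr rfl (fun y _ => Finset.sum_comm))]
      rw [Finset.sum_congr rfl (fun x _ => Finset.sum_comm)]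
      rw [Finset.sum_comm]
    rw [step1]
    have hfix : ∀ π : Equiv.Perm (Fin n),
        (∑ x : Fin n, ∑ y ∈ Finset.univ.erase x, ∑ z ∈ (Finset.univ.erase x).erase y,
          g1 (π x) * g2 (π y) * g3 (π z))
        = ∑ x : Fin n, ∑ y ∈ Finset.univ.erase x, ∑ z ∈ (Finset.univ.erase x).erase y,
          g1 x * g2 y * g3 z := by
      intro π
      have houter := Equiv.sum_comp π (fun x : Fin n => ∑ y ∈ Finset.univ.erase x,
        ∑ z ∈ (Finset.univ.erase x).erase y, g1 x * g2 y * g3 z)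
      rw [← houter]
      refine Finset.sum_congr rfl fun x _ => ?_
      -- middle level
      have hmapy : (Finset.univ.erase x).map π.toEmbedding = Finset.univ.erase (π x) := by
        rw [Finset.map_erase, Finset.map_univ_equiv]; rfl
      have hmidy := Finset.sum_map (Finset.univ.erase x) π.toEmbedding
        (fun y => ∑ z ∈ (Finset.univ.erase (π x)).erase y, g1 (π x) * g2 y * g3 z)
      rw [hmapy] at hmidy
      simp only [Equiv.coe_toEmbedding] at hmidy
      rw [hmidy]
      refine Finset.sum_congr rfl fun y _ => ?_
      -- inner level
      have hmapz : ((Finset.univ.erase x).erase y).map π.toEmbedding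
          = (Finset.univ.erase (π x)).erase (π y) := by
        rw [Finset.map_erase, Finset.map_erase, Finset.map_univ_equiv]; rfl
      have hinz := Finset.sum_map ((Finset.univ.erase x).erase y) π.toEmbedding
        (fun z => g1 (π x) * g2 (π y) * g3 z)
      rw [hmapz] at hinz
      simp only [Equiv.coe_toEmbedding] at hinz
      rw [hinz]
    rw [Finset.sum_congr rfl (fun π _ => hfix π), Finset.sum_const, Finset.card_univ,
      Fintype.card_perm, Fintype.card_fin, nsmul_eq_mul]
  -- combine
  have hNfac : n.factorial = (n * ((n-1) * (n-2))) * (n-3).factorial := by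
    obtain ⟨m, rfl⟩ : ∃ m, n = m + 3 := ⟨n - 3, by omega⟩
    have e1 : m + 3 - 1 = m + 2 := by omega
    have e2 : m + 3 - 2 = m + 1 := by omega
    have e3 : m + 3 - 3 = m := by omega
    rw [e1, e2, e3]
    show (m+2+1).factorial = _
    rw [Nat.factorial_succ, Nat.factorial_succ, Nat.factorial_succ]
    ring
  have hNne : ((n * ((n-1) * (n-2)) : ℕ) : ℝ) ≠ 0 := by
    have : 0 < n * ((n-1) * (n-2)) :=
      Nat.mul_pos (by omega) (Nat.mul_pos (by omega) (by omega))
    exact_mod_cast this.ne'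
  apply mul_left_cancel₀ hNne
  rw [← hT, hswap]
  rw [show ((n.factorial : ℕ) : ℝ)
      = ((n * ((n-1) * (n-2)) : ℕ) : ℝ) * (((n-3).factorial : ℕ) : ℝ) by
    rw [← Nat.cast_mul, ← hNfac]]
  ring

end EA

namespace EA2
open EA
variable {n : ℕ}

lemma exists_third (hn : 3 ≤ n) (a b : Fin n) : ∃ c : Fin n, c ≠ a ∧ c ≠ b := by
  have h1 : ({a, b} : Finset (Fin n)).card ≤ 2 :=
    le_trans (Finset.card_insert_le _ _) (by simp)
  have h3 := Finset.le_card_sdiff ({a, b} : Finset (Fin n)) Finset.univ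
  rw [Finset.card_univ, Fintype.card_fin] at h3
  have h2 : 0 < ((Finset.univ : Finset (Fin n)) \ {a, b}).card := by omega
  obtain ⟨c, hc⟩ := Finset.card_pos.mp h2
  rw [Finset.mem_sdiff, Finset.mem_insert, Finset.mem_singleton] at hc
  exact ⟨c, fun h => hc.2 (Or.inl h), fun h => hc.2 (Or.inr h)⟩

lemma P2 (hn : 3 ≤ n) {a b : Fin n} (hab : a ≠ b) (g1 g2 : Fin n → ℝ) :
    ∑ π : Equiv.Perm (Fin n), g1 (π a) * g2 (π b)
      = ((n - 2).factorial : ℝ) *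
        ∑ x : Fin n, ∑ y ∈ Finset.univ.erase x, g1 x * g2 y := by
  obtain ⟨c, hca, hcb⟩ := exists_third hn a b
  have h := P3 hn hab (Ne.symm hca) (Ne.symm hcb) g1 g2 (fun _ => 1)
  simp only [mul_one] at h
  rw [h]
  have hconst : ∀ x : Fin n, ∀ y ∈ Finset.univ.erase x,
      (∑ _z ∈ (Finset.univ.erase x).erase y, g1 x * g2 y) = ((n-2 : ℕ) : ℝ) * (g1 x * g2 y) := by
    intro x y hy
    rw [Finset.sum_const, Finset.card_erase_of_mem hy,
      Finset.card_erase_of_mem (Finset.mem_univ x), Finset.card_univ, Fintype.card_fin,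
      nsmul_eq_mul, Nat.sub_sub]
  rw [Finset.sum_congr rfl (fun x _ => Finset.sum_congr rfl (fun y hy => hconst x y hy))]
  have hfac : ((n-2).factorial : ℝ) = ((n-2 : ℕ) : ℝ) * ((n - 3).factorial : ℝ) := by
    obtain ⟨m, rfl⟩ : ∃ m, n = m + 3 := ⟨n - 3, by omega⟩
    have e2 : m + 3 - 2 = m + 1 := by omega
    have e3 : m + 3 - 3 = m := by omega
    rw [e2, e3]
    push_cast [Nat.factorial_succ]
    ring
  rw [hfac]
  rw [Finset.sum_congr rfl (fun x _ => (Finset.mul_sum _ _ _).symm)]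
  rw [← Finset.mul_sum]
  ring

lemma P1 (hn : 3 ≤ n) (v : Fin n) (g : Fin n → ℝ) :
    ∑ π : Equiv.Perm (Fin n), g (π v)
      = ((n - 1).factorial : ℝ) * ∑ x : Fin n, g x := by
  obtain ⟨b, hbv, _⟩ := exists_third hn v v
  have h := P2 hn (Ne.symm hbv) g (fun _ => 1)
  simp only [mul_one] at h
  rw [h]
  have hconst : ∀ x : Fin n, (∑ _y ∈ Finset.univ.erase x, g x) = ((n-1 : ℕ) : ℝ) * g x := by
    intro x
    rw [Finset.sum_const, Finset.card_erase_of_mem (Finset.mem_univ x), Finset.card_univ,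
      Fintype.card_fin, nsmul_eq_mul]
  rw [Finset.sum_congr rfl (fun x _ => hconst x)]
  have hfac : ((n-1).factorial : ℝ) = ((n-1 : ℕ) : ℝ) * ((n - 2).factorial : ℝ) := by
    obtain ⟨m, rfl⟩ : ∃ m, n = m + 3 := ⟨n - 3, by omega⟩
    have e1 : m + 3 - 1 = m + 2 := by omega
    have e2 : m + 3 - 2 = m + 1 := by omega
    rw [e1, e2]
    push_cast [Nat.factorial_succ]
    ring
  rw [hfac, ← Finset.mul_sum]
  ring

end EA2

namespace EA3
open EA EA2
variable {n t : ℕ}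

def indF (t : ℕ) (w : Fin n) : ℝ := if (w : ℕ) < t then 1 else 0

lemma sum_indF (ht2 : t < n) : ∑ x : Fin n, indF t x = (t : ℝ) := by
  unfold indF
  rw [Finset.sum_boole]
  have hfil : (Finset.univ.filter fun x : Fin n => (x : ℕ) < t) = Finset.Iio ⟨t, ht2⟩ := by
    ext z
    simp [Fin.lt_def]
  rw [hfil, Fin.card_Iio]

lemma fac_cast1 (hn : 3 ≤ n) : (n.factorial : ℝ) = (n : ℝ) * ((n-1).factorial : ℝ) := by
  obtain ⟨m, rfl⟩ : ∃ m, n = m + 3 := ⟨n - 3, by omega⟩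
  have e1 : m + 3 - 1 = m + 2 := by omega
  rw [e1]
  push_cast [show m + 3 = (m+2)+1 from rfl, Nat.factorial_succ]
  ring

lemma fac_cast2 (hn : 3 ≤ n) :
    (n.factorial : ℝ) = (n : ℝ) * ((n : ℝ) - 1) * ((n-2).factorial : ℝ) := by
  obtain ⟨m, rfl⟩ : ∃ m, n = m + 3 := ⟨n - 3, by omega⟩
  have e2 : m + 3 - 2 = m + 1 := by omega
  rw [e2]
  push_cast [show m + 3 = (m+1)+1+1 from rfl, Nat.factorial_succ]
  ring

lemma fac_cast3 (hn : 3 ≤ n) :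
    (n.factorial : ℝ) = (n : ℝ) * ((n : ℝ) - 1) * ((n : ℝ) - 2) * ((n-3).factorial : ℝ) := by
  obtain ⟨m, rfl⟩ : ∃ m, n = m + 3 := ⟨n - 3, by omega⟩
  have e3 : m + 3 - 3 = m := by omega
  rw [e3]
  push_cast [show m + 3 = m+1+1+1 from rfl, Nat.factorial_succ]
  ring

lemma fac_cast_ne (k : ℕ) : ((k.factorial : ℕ) : ℝ) ≠ 0 :=
  Nat.cast_ne_zero.mpr (Nat.factorial_ne_zero k)

lemma Ex_ind (hn : 3 ≤ n) (ht2 : t < n) (v : Fin n) :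
    Ex (fun π : Equiv.Perm (Fin n) => indF t (π v)) = (t : ℝ) / (n : ℝ) := by
  unfold Ex
  rw [P1 hn v (indF t), sum_indF ht2, fac_cast1 hn]
  have hn0 : (n : ℝ) ≠ 0 := by positivity
  rw [mul_comm (n:ℝ) _, mul_div_mul_left _ _ (fac_cast_ne (n-1))]

lemma Ex_ind_pair (hn : 3 ≤ n) (ht2 : t < n) {a b : Fin n} (hab : a ≠ b) :
    Ex (fun π : Equiv.Perm (Fin n) => indF t (π a) * indF t (π b))
      = ((t : ℝ) * ((t : ℝ) - 1)) / ((n : ℝ) * ((n : ℝ) - 1)) := by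
  unfold Ex
  rw [P2 hn hab (indF t) (indF t)]
  have hinner : ∀ x : Fin n,
      (∑ y ∈ Finset.univ.erase x, indF t x * indF t y) = indF t x * ((t : ℝ) - 1) := by
    intro x
    rw [← Finset.mul_sum, Finset.sum_erase_eq_sub (Finset.mem_univ x), sum_indF ht2]
    unfold indF
    by_cases h : (x : ℕ) < t <;> simp [h]
  rw [Finset.sum_congr rfl fun x _ => hinner x, ← Finset.sum_mul, sum_indF ht2, fac_cast2 hn]
  have hn0 : (n : ℝ) ≠ 0 := by positivity
  have hn1 : (n : ℝ) - 1 ≠ 0 := by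
    have : (3 : ℝ) ≤ (n : ℝ) := by exact_mod_cast hn
    linarith
  field_simp

lemma Ex_ind_triple (hn : 3 ≤ n) (ht2 : t < n) {a b v : Fin n}
    (hab : a ≠ b) (hav : a ≠ v) (hbv : b ≠ v) :
    Ex (fun π : Equiv.Perm (Fin n) => indF t (π a) * indF t (π b) * indF t (π v))
      = ((t : ℝ) * ((t : ℝ) - 1) * ((t : ℝ) - 2))
        / ((n : ℝ) * ((n : ℝ) - 1) * ((n : ℝ) - 2)) := by
  unfold Ex
  rw [P3 hn hab hav hbv (indF t) (indF t) (indF t)]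
  have hinner : ∀ x : Fin n, ∀ y ∈ Finset.univ.erase x,
      (∑ z ∈ (Finset.univ.erase x).erase y, indF t x * indF t y * indF t z)
        = indF t x * indF t y * ((t : ℝ) - 2) := by
    intro x y hy
    rw [← Finset.mul_sum, Finset.sum_erase_eq_sub hy,
      Finset.sum_erase_eq_sub (Finset.mem_univ x), sum_indF ht2]
    unfold indF
    by_cases h1 : (x : ℕ) < t <;> by_cases h2 : (y : ℕ) < t <;> simp [h1, h2] <;> ring
  rw [Finset.sum_congr rfl (fun x _ => Finset.sum_congr rfl (fun y hy => hinner x y hy))]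
  have hmid : ∀ x : Fin n,
      (∑ y ∈ Finset.univ.erase x, indF t x * indF t y * ((t : ℝ) - 2))
        = indF t x * (((t : ℝ) - 1) * ((t : ℝ) - 2)) := by
    intro x
    rw [Finset.sum_congr rfl (fun y _ => show indF t x * indF t y * ((t:ℝ)-2)
        = (indF t x * ((t:ℝ)-2)) * indF t y by ring)]
    rw [← Finset.mul_sum, Finset.sum_erase_eq_sub (Finset.mem_univ x), sum_indF ht2]
    unfold indF
    by_cases h : (x : ℕ) < t <;> simp [h] <;> ring
  rw [Finset.sum_congr rfl (fun x _ => hmid x), ← Finset.sum_mul, sum_indF ht2, fac_cast3 hn]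
  have hn0 : (n : ℝ) ≠ 0 := by positivity
  have hge : (3 : ℝ) ≤ (n : ℝ) := by exact_mod_cast hn
  have hn1 : (n : ℝ) - 1 ≠ 0 := by linarith
  have hn2 : (n : ℝ) - 2 ≠ 0 := by linarith
  field_simp

end EA3



namespace EA4
open EA EA2 EA3
variable {n t : ℕ}

/-- The key orthogonality bracket: for any edge `{a,b}` and any vertex `v`,
the weighted edge indicator is uncorrelated with the vertex indicator. -/
lemma bracket (hn : 4 ≤ n) (ht1 : 1 ≤ t) (ht2 : t < n) {a b : Fin n} (v : Fin n)
    (hab : a ≠ b) :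
    Cov (fun π : Equiv.Perm (Fin n) =>
        (1 - ((t : ℝ) - 1) / ((n : ℝ) - 2)) * (indF t (π a) * indF t (π b))
          + (((t : ℝ) - 1) / ((n : ℝ) - 2)) * ((1 - indF t (π a)) * (1 - indF t (π b))))
      (fun π => indF t (π v)) = 0 := by
  have hn3 : 3 ≤ n := by omega
  have hn0 : (n : ℝ) ≠ 0 := by positivity
  have hge : (4 : ℝ) ≤ (n : ℝ) := by exact_mod_cast hn
  have hn1 : (n : ℝ) - 1 ≠ 0 := by linarith
  have hn2 : (n : ℝ) - 2 ≠ 0 := by linarith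
  set p : ℝ := ((t : ℝ) - 1) / ((n : ℝ) - 2) with hp
  rw [Cov_eq]
  by_cases hva : v = a
  · subst hva
    -- product function reduces pointwise
    have hprod : (fun π : Equiv.Perm (Fin n) =>
        ((1 - p) * (indF t (π v) * indF t (π b))
          + p * ((1 - indF t (π v)) * (1 - indF t (π b)))) * indF t (π v))
        = fun π => (1 - p) * ((fun π => indF t (π v) * indF t (π b)) π) := by
      funext π
      unfold indF
      by_cases h1 : ((π v : Fin n) : ℕ) < t <;> by_cases h2 : ((π b : Fin n) : ℕ) < t <;>
        simp [h1, h2]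
    rw [hprod, Ex_cmul, Ex_ind_pair hn3 ht2 hab]
    -- expectation of the weighted function
    have hsplit : (fun π : Equiv.Perm (Fin n) =>
        (1 - p) * (indF t (π v) * indF t (π b))
          + p * ((1 - indF t (π v)) * (1 - indF t (π b))))
        = fun π => (1 - p) * ((fun π => indF t (π v) * indF t (π b)) π)
            + p * ((fun π => (1 - indF t (π v)) * (1 - indF t (π b))) π) := rfl
    rw [hsplit, Ex_add, Ex_cmul, Ex_cmul]
    have hY : (fun π : Equiv.Perm (Fin n) => (1 - indF t (π v)) * (1 - indF t (π b)))
        = fun π => (fun _ => (1:ℝ)) π - (fun π => indF t (π v)) π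
            - (fun π => indF t (π b)) π + (fun π => indF t (π v) * indF t (π b)) π := by
      funext π; simp only []; ring
    rw [hY, Ex_comb4, Ex_const, Ex_ind hn3 ht2, Ex_ind hn3 ht2, Ex_ind_pair hn3 ht2 hab]
    rw [hp]
    field_simp
    ring
  · by_cases hvb : v = b
    · subst hvb
      have hprod : (fun π : Equiv.Perm (Fin n) =>
          ((1 - p) * (indF t (π a) * indF t (π v))
            + p * ((1 - indF t (π a)) * (1 - indF t (π v)))) * indF t (π v))
          = fun π => (1 - p) * ((fun π => indF t (π a) * indF t (π v)) π) := by
        funext π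
        unfold indF
        by_cases h1 : ((π a : Fin n) : ℕ) < t <;> by_cases h2 : ((π v : Fin n) : ℕ) < t <;>
          simp [h1, h2]
      rw [hprod, Ex_cmul, Ex_ind_pair hn3 ht2 hab]
      have hsplit : (fun π : Equiv.Perm (Fin n) =>
          (1 - p) * (indF t (π a) * indF t (π v))
            + p * ((1 - indF t (π a)) * (1 - indF t (π v))))
          = fun π => (1 - p) * ((fun π => indF t (π a) * indF t (π v)) π)
              + p * ((fun π => (1 - indF t (π a)) * (1 - indF t (π v))) π) := rfl
      rw [hsplit, Ex_add, Ex_cmul, Ex_cmul]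
      have hY : (fun π : Equiv.Perm (Fin n) => (1 - indF t (π a)) * (1 - indF t (π v)))
          = fun π => (fun _ => (1:ℝ)) π - (fun π => indF t (π a)) π
              - (fun π => indF t (π v)) π + (fun π => indF t (π a) * indF t (π v)) π := by
        funext π; simp only []; ring
      rw [hY, Ex_comb4, Ex_const, Ex_ind hn3 ht2, Ex_ind hn3 ht2, Ex_ind_pair hn3 ht2 hab]
      rw [hp]
      field_simp
      ring
    · -- v distinct from a and b
      have hav : a ≠ v := fun h => hva h.symm
      have hbv : b ≠ v := fun h => hvb h.symm
      have hprod : (fun π : Equiv.Perm (Fin n) =>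
          ((1 - p) * (indF t (π a) * indF t (π b))
            + p * ((1 - indF t (π a)) * (1 - indF t (π b)))) * indF t (π v))
          = fun π => (1 - p) * ((fun π => indF t (π a) * indF t (π b) * indF t (π v)) π)
              + p * ((fun π => (fun π => indF t (π v)) π
                  - (fun π => indF t (π a) * indF t (π v)) π
                  - (fun π => indF t (π b) * indF t (π v)) π
                  + (fun π => indF t (π a) * indF t (π b) * indF t (π v)) π) π) := by
        funext π; simp only []; ring
      rw [hprod, Ex_add, Ex_cmul, Ex_cmul, Ex_comb4, Ex_ind_triple hn3 ht2 hab hav hbv,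
        Ex_ind hn3 ht2, Ex_ind_pair hn3 ht2 hav, Ex_ind_pair hn3 ht2 hbv]
      have hsplit : (fun π : Equiv.Perm (Fin n) =>
          (1 - p) * (indF t (π a) * indF t (π b))
            + p * ((1 - indF t (π a)) * (1 - indF t (π b))))
          = fun π => (1 - p) * ((fun π => indF t (π a) * indF t (π b)) π)
              + p * ((fun π => (1 - indF t (π a)) * (1 - indF t (π b))) π) := rfl
      rw [hsplit, Ex_add, Ex_cmul, Ex_cmul]
      have hY : (fun π : Equiv.Perm (Fin n) => (1 - indF t (π a)) * (1 - indF t (π b)))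
          = fun π => (fun _ => (1:ℝ)) π - (fun π => indF t (π a)) π
              - (fun π => indF t (π b)) π + (fun π => indF t (π a) * indF t (π b)) π := by
        funext π; simp only []; ring
      rw [hY, Ex_comb4, Ex_const, Ex_ind hn3 ht2, Ex_ind hn3 ht2, Ex_ind_pair hn3 ht2 hab]
      rw [hp]
      have ht1' : (1 : ℝ) ≤ (t : ℝ) := by exact_mod_cast ht1
      field_simp
      ring

end EA4

namespace EA5
open EA EA2 EA3 EA4
variable {n t : ℕ}

def Xe (t : ℕ) (e : Sym2 (Fin n)) (π : Equiv.Perm (Fin n)) : ℝ :=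
  Sym2.lift ⟨fun a b => indF t (π a) * indF t (π b), fun _ _ => mul_comm _ _⟩ e

def Ye (t : ℕ) (e : Sym2 (Fin n)) (π : Equiv.Perm (Fin n)) : ℝ :=
  Sym2.lift ⟨fun a b => (1 - indF t (π a)) * (1 - indF t (π b)), fun _ _ => mul_comm _ _⟩ e

lemma Xe_mk (a b : Fin n) (π : Equiv.Perm (Fin n)) :
    Xe t s(a, b) π = indF t (π a) * indF t (π b) := rfl

lemma Ye_mk (a b : Fin n) (π : Equiv.Perm (Fin n)) :
    Ye t s(a, b) π = (1 - indF t (π a)) * (1 - indF t (π b)) := rfl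

lemma R1_cast (G : SimpleGraph (Fin n)) (π : Equiv.Perm (Fin n)) :
    ((R1 G t π : ℕ) : ℝ) = ∑ e ∈ G.edgeFinset, Xe t e π := by
  unfold R1
  rw [Finset.card_filter]
  push_cast
  refine Finset.sum_congr rfl fun e he => ?_
  clear he
  induction e using Sym2.inductionOn with
  | hf a b =>
    rw [Xe_mk]
    have hcond : (∀ v ∈ s(a, b), lab π v ≤ t)
        ↔ (((π a : Fin n) : ℕ) < t ∧ ((π b : Fin n) : ℕ) < t) := by
      simp only [Sym2.mem_iff, forall_eq_or_imp, forall_eq, lab]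
      omega
    rw [if_congr hcond rfl rfl]
    unfold indF
    by_cases h1 : ((π a : Fin n) : ℕ) < t <;> by_cases h2 : ((π b : Fin n) : ℕ) < t <;>
      simp [h1, h2]

lemma R2_cast (G : SimpleGraph (Fin n)) (π : Equiv.Perm (Fin n)) :
    ((R2 G t π : ℕ) : ℝ) = ∑ e ∈ G.edgeFinset, Ye t e π := by
  unfold R2
  rw [Finset.card_filter]
  push_cast
  refine Finset.sum_congr rfl fun e he => ?_
  clear he
  induction e using Sym2.inductionOn with
  | hf a b =>
    rw [Ye_mk]
    have hcond : (∀ v ∈ s(a, b), t < lab π v)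
        ↔ (¬ ((π a : Fin n) : ℕ) < t ∧ ¬ ((π b : Fin n) : ℕ) < t) := by
      simp only [Sym2.mem_iff, forall_eq_or_imp, forall_eq, lab]
      omega
    rw [if_congr hcond rfl rfl]
    unfold indF
    by_cases h1 : ((π a : Fin n) : ℕ) < t <;> by_cases h2 : ((π b : Fin n) : ℕ) < t <;>
      simp [h1, h2]

lemma Rw_rep (G : SimpleGraph (Fin n)) (π : Equiv.Perm (Fin n)) :
    Rw G t π = ∑ e ∈ G.edgeFinset,
      ((1 - ((t : ℝ) - 1) / ((n : ℝ) - 2)) * Xe t e π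
        + (((t : ℝ) - 1) / ((n : ℝ) - 2)) * Ye t e π) := by
  unfold Rw
  rw [R1_cast, R2_cast, Finset.mul_sum, Finset.mul_sum, ← Finset.sum_add_distrib]

lemma Rdiff_rep (G : SimpleGraph (Fin n)) (π : Equiv.Perm (Fin n)) :
    Rdiff G t π = ∑ e ∈ G.edgeFinset, (Xe t e π - Ye t e π) := by
  unfold Rdiff
  rw [R1_cast, R2_cast, ← Finset.sum_sub_distrib]

lemma covRwRdiff (hn : 4 ≤ n) (ht1 : 1 ≤ t) (ht2 : t < n) (G : SimpleGraph (Fin n)) :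
    Cov (fun π : Equiv.Perm (Fin n) => Rw G t π) (fun π => Rdiff G t π) = 0 := by
  have hRw : (fun π : Equiv.Perm (Fin n) => Rw G t π)
      = fun π => ∑ e ∈ G.edgeFinset,
          (fun e π => (1 - ((t : ℝ) - 1) / ((n : ℝ) - 2)) * Xe t e π
            + (((t : ℝ) - 1) / ((n : ℝ) - 2)) * Ye t e π) e π := funext (Rw_rep G)
  have hRd : (fun π : Equiv.Perm (Fin n) => Rdiff G t π)
      = fun π => ∑ e ∈ G.edgeFinset, (fun e π => Xe t e π - Ye t e π) e π :=
    funext (Rdiff_rep G)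
  rw [hRw, hRd, Cov_sum_left]
  refine Finset.sum_eq_zero fun e he => ?_
  rw [Cov_sum_right]
  refine Finset.sum_eq_zero fun f hf => ?_
  clear hf
  induction f using Sym2.inductionOn with
  | hf c d =>
    have hXY : (fun π : Equiv.Perm (Fin n) => (fun e π => Xe t e π - Ye t e π) s(c, d) π)
        = fun π => ((fun π => indF t (π c)) π + (fun π => indF t (π d)) π)
            + (fun _ : Equiv.Perm (Fin n) => (-1 : ℝ)) π := by
      funext π
      simp only [Xe_mk, Ye_mk]
      ring
    rw [hXY, Cov_add_right, Cov_add_right, Cov_const_right]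
    revert he
    induction e using Sym2.inductionOn with
    | hf a b =>
      intro he
      have hadj : G.Adj a b := (SimpleGraph.mem_edgeSet G).mp (SimpleGraph.mem_edgeFinset.mp he)
      have hab : a ≠ b := hadj.ne
      have hW : (fun π : Equiv.Perm (Fin n) =>
          (fun e π => (1 - ((t : ℝ) - 1) / ((n : ℝ) - 2)) * Xe t e π
            + (((t : ℝ) - 1) / ((n : ℝ) - 2)) * Ye t e π) s(a, b) π)
          = fun π => (1 - ((t : ℝ) - 1) / ((n : ℝ) - 2)) * (indF t (π a) * indF t (π b))
              + (((t : ℝ) - 1) / ((n : ℝ) - 2)) * ((1 - indF t (π a)) * (1 - indF t (π b))) := by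
        funext π
        simp only [Xe_mk, Ye_mk]
      rw [hW, bracket hn ht1 ht2 c hab, bracket hn ht1 ht2 d hab]
      ring

end EA5


theorem S_eq_Zw_sq_add_Zdiff_sq (n t : ℕ) (hn : 4 ≤ n) (ht1 : 1 ≤ t) (ht2 : t < n)
    (G : SimpleGraph (Fin n))
    (hSigma : IsUnit (SigmaMat G t).det)
    (hVw : 0 < Var (fun π => Rw G t π))
    (hVd : 0 < Var (fun π => Rdiff G t π)) :
    ∀ π : Equiv.Perm (Fin n), S G t π = Zw G t π ^ 2 + Zdiff G t π ^ 2 := by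
  intro π
  have hn3 : 3 ≤ n := by omega
  have hge : (4 : ℝ) ≤ (n : ℝ) := by exact_mod_cast hn
  have hn2 : (n : ℝ) - 2 ≠ 0 := by linarith
  set p : ℝ := ((t : ℝ) - 1) / ((n : ℝ) - 2) with hp
  set V1 := Var (fun σ : Equiv.Perm (Fin n) => ((R1 G t σ : ℕ) : ℝ)) with hV1
  set V2 := Var (fun σ : Equiv.Perm (Fin n) => ((R2 G t σ : ℕ) : ℝ)) with hV2
  set C := Cov (fun σ : Equiv.Perm (Fin n) => ((R1 G t σ : ℕ) : ℝ))
      (fun σ : Equiv.Perm (Fin n) => ((R2 G t σ : ℕ) : ℝ)) with hC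
  set A := ((R1 G t π : ℕ) : ℝ) - Ex (fun σ => ((R1 G t σ : ℕ) : ℝ)) with hA
  set B := ((R2 G t π : ℕ) : ℝ) - Ex (fun σ => ((R2 G t σ : ℕ) : ℝ)) with hB
  -- linear-combination representations
  have hRwfun : (fun σ : Equiv.Perm (Fin n) => Rw G t σ)
      = fun σ => (1 - p) * ((fun σ : Equiv.Perm (Fin n) => ((R1 G t σ : ℕ) : ℝ)) σ)
          + p * ((fun σ : Equiv.Perm (Fin n) => ((R2 G t σ : ℕ) : ℝ)) σ) := by
    funext σ
    show Rw G t σ = _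
    unfold Rw
    rw [hp]
  have hRdfun : (fun σ : Equiv.Perm (Fin n) => Rdiff G t σ)
      = fun σ => (1 : ℝ) * ((fun σ : Equiv.Perm (Fin n) => ((R1 G t σ : ℕ) : ℝ)) σ)
          + (-1 : ℝ) * ((fun σ : Equiv.Perm (Fin n) => ((R2 G t σ : ℕ) : ℝ)) σ) := by
    funext σ
    show Rdiff G t σ = _
    unfold Rdiff
    ring
  -- variance expansions
  have hVw_exp : Var (fun σ : Equiv.Perm (Fin n) => Rw G t σ)
      = (1-p)*(1-p)*V1 + ((1-p)*p + p*(1-p))*C + p*p*V2 := by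
    rw [EA.Var_eq_Cov, hRwfun, EA.Cov_comb, ← EA.Var_eq_Cov, ← EA.Var_eq_Cov]
  have hVd_exp : Var (fun σ : Equiv.Perm (Fin n) => Rdiff G t σ)
      = 1*1*V1 + (1*(-1) + (-1)*1)*C + (-1)*(-1)*V2 := by
    rw [EA.Var_eq_Cov, hRdfun, EA.Cov_comb, ← EA.Var_eq_Cov, ← EA.Var_eq_Cov]
  -- orthogonality
  have horth := EA5.covRwRdiff hn ht1 ht2 G
  rw [hRwfun, hRdfun, EA.Cov_comb, ← EA.Var_eq_Cov, ← EA.Var_eq_Cov] at horth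
  -- horth : (1-p)*1*V1 + ((1-p)*(-1) + p*1)*C + p*(-1)*V2 = 0
  -- determinant identity
  have hdet : V1 * V2 - C * C
      = Var (fun σ : Equiv.Perm (Fin n) => Rw G t σ)
        * Var (fun σ : Equiv.Perm (Fin n) => Rdiff G t σ) := by
    rw [hVw_exp, hVd_exp]
    linear_combination (-((1-p)*V1 + (p - (1-p))*C - p*V2)) * horth
  have hdet_ne : V1 * V2 - C * C ≠ 0 := by
    rw [hdet]; exact (mul_pos hVw hVd).ne'
  -- inverse of the covariance matrix
  have hSig : SigmaMat G t = !![V1, C; C, V2] := rfl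
  have hinv : (SigmaMat G t)⁻¹ = (V1*V2 - C*C)⁻¹ • !![V2, -C; -C, V1] := by
    rw [hSig, Matrix.inv_def, Matrix.adjugate_fin_two_of, Matrix.det_fin_two_of,
      Ring.inverse_eq_inv]
  -- value of S
  have h0 : S G t π = dotProduct ![A, B] ((SigmaMat G t)⁻¹.mulVec ![A, B]) := rfl
  have hSval : S G t π = (V2*A^2 - 2*C*A*B + V1*B^2) / (V1*V2 - C*C) := by
    rw [h0, hinv]
    simp only [Matrix.mulVec, dotProduct, Fin.sum_univ_two, Matrix.smul_apply, Matrix.of_apply,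
      smul_eq_mul, Matrix.cons_val_zero, Matrix.cons_val_one, Matrix.head_cons,
      Matrix.cons_val', Matrix.empty_val', Matrix.cons_val_fin_one, Matrix.head_fin_const]
    field_simp
    ring
  -- values of the standardized statistics
  have hZw : Zw G t π ^ 2
      = ((1-p)*A + p*B)^2 / Var (fun σ : Equiv.Perm (Fin n) => Rw G t σ) := by
    have hz : Zw G t π = (Rw G t π - Ex (fun σ => Rw G t σ))
        / Real.sqrt (Var (fun σ => Rw G t σ)) := rfl
    rw [hz, div_pow, Real.sq_sqrt hVw.le]
    have hnum : Rw G t π - Ex (fun σ => Rw G t σ) = (1-p)*A + p*B := by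
      have h1 : Rw G t π = (1-p) * ((R1 G t π : ℕ) : ℝ) + p * ((R2 G t π : ℕ) : ℝ) := by
        unfold Rw; rw [hp]
      rw [h1, hRwfun, EA.Ex_lin, hA, hB]
      ring
    rw [hnum]
  have hZd : Zdiff G t π ^ 2
      = (A - B)^2 / Var (fun σ : Equiv.Perm (Fin n) => Rdiff G t σ) := by
    have hz : Zdiff G t π = (Rdiff G t π - Ex (fun σ => Rdiff G t σ))
        / Real.sqrt (Var (fun σ => Rdiff G t σ)) := rfl
    rw [hz, div_pow, Real.sq_sqrt hVd.le]
    have hnum : Rdiff G t π - Ex (fun σ => Rdiff G t σ) = A - B := by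
      have h1 : Rdiff G t π = ((R1 G t π : ℕ) : ℝ) - ((R2 G t π : ℕ) : ℝ) := rfl
      rw [h1, hRdfun, EA.Ex_lin, hA, hB]
      ring
    rw [hnum]
  -- final algebra
  rw [hSval, hZw, hZd, hdet, div_add_div _ _ hVw.ne' hVd.ne']
  have hnum : V2*A^2 - 2*C*A*B + V1*B^2
      = ((1-p)*A + p*B)^2 * Var (fun σ : Equiv.Perm (Fin n) => Rdiff G t σ)
        + Var (fun σ : Equiv.Perm (Fin n) => Rw G t σ) * (A - B)^2 := by
    rw [hVw_exp, hVd_exp]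
    linear_combination (-2*(A-B)*((1-p)*A+p*B)) * horth
  rw [hnum]
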